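/- Let Λ be the Lobachevsky function. Then (16/9)·Λ(π/4) > Λ(3π/8) + Λ(π/8). -/

import Mathlib

open Real

/-- The Lobachevsky function `Λ(θ) = −∫₀^θ log|2 sin t| dt`. -/
noncomputable def lobachevsky (θ : ℝ) : ℝ :=
  -∫ t in (0:ℝ)..θ, Real.log |2 * Real.sin t|

namespace EdgeTwistAux

open MeasureTheory Set

noncomputable def f (t : ℝ) : ℝ := Real.log |2 * Real.sin t|

lemma sqrt_le_of_sq_le {x b : ℝ} (hb : 0 ≤ b) (h : x ≤ b ^ 2) : Real.sqrt x ≤ b :=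
  (Real.sqrt_le_sqrt h).trans_eq (Real.sqrt_sq hb)

lemma le_sqrt_of_sq_le {a x : ℝ} (ha : 0 ≤ a) (h : a ^ 2 ≤ x) : a ≤ Real.sqrt x :=
  (Real.sqrt_sq ha).symm.trans_le (Real.sqrt_le_sqrt h)

lemma one_sub_inv_le_log {x : ℝ} (hx : 0 < x) : 1 - 1 / x ≤ Real.log x := by
  have h := Real.log_le_sub_one_of_pos (inv_pos.mpr hx)
  rw [Real.log_inv] at h
  have hx' : x⁻¹ = 1 / x := by rw [one_div]
  linarith [h, hx'.le]

lemma log_eq_sixteen_log {x : ℝ} (hx : 0 ≤ x) :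
    Real.log x = 16 * Real.log (Real.sqrt (Real.sqrt (Real.sqrt (Real.sqrt x)))) := by
  rw [Real.log_sqrt (Real.sqrt_nonneg _), Real.log_sqrt (Real.sqrt_nonneg _),
    Real.log_sqrt (Real.sqrt_nonneg _), Real.log_sqrt hx]
  ring

lemma log_le_sixteen {x u : ℝ} (hx : 0 < x)
    (h : Real.sqrt (Real.sqrt (Real.sqrt (Real.sqrt x))) ≤ u) :
    Real.log x ≤ 16 * (u - 1) := by
  set s := Real.sqrt (Real.sqrt (Real.sqrt (Real.sqrt x))) with hs
  have hspos : 0 < s := by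
    apply Real.sqrt_pos.mpr; apply Real.sqrt_pos.mpr; apply Real.sqrt_pos.mpr
    exact Real.sqrt_pos.mpr hx
  have h1 : Real.log s ≤ s - 1 := Real.log_le_sub_one_of_pos hspos
  rw [log_eq_sixteen_log hx.le, ← hs]
  nlinarith

lemma sixteen_le_log {x l : ℝ} (hl : 0 < l)
    (h : l ≤ Real.sqrt (Real.sqrt (Real.sqrt (Real.sqrt x)))) :
    16 * (1 - 1 / l) ≤ Real.log x := by
  set s := Real.sqrt (Real.sqrt (Real.sqrt (Real.sqrt x))) with hs
  have hspos : 0 < s := lt_of_lt_of_le hl h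
  have hxpos : 0 ≤ x := by
    by_contra hc
    push_neg at hc
    have : Real.sqrt x = 0 := Real.sqrt_eq_zero'.mpr hc.le
    have : s = 0 := by simp [hs, this]
    linarith
  have h1 : 1 - 1 / s ≤ Real.log s := one_sub_inv_le_log hspos
  have h2 : 1 / s ≤ 1 / l := one_div_le_one_div_of_le hl h
  rw [log_eq_sixteen_log hxpos, ← hs]
  nlinarith

lemma sqrt2_lb : (1.41421356 : ℝ) ≤ Real.sqrt 2 :=
  le_sqrt_of_sq_le (by norm_num) (by norm_num)

lemma sqrt2_ub : Real.sqrt 2 ≤ (1.41421357 : ℝ) :=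
  sqrt_le_of_sq_le (by norm_num) (by norm_num)

lemma sqrt3_lb : (1.7320508 : ℝ) ≤ Real.sqrt 3 :=
  le_sqrt_of_sq_le (by norm_num) (by norm_num)

/-- upper bound for `log 1.1111404` -/
lemma log_z_ub : Real.log 1.1111404 ≤ 0.105736 := by
  have c1 : Real.sqrt 1.1111404 ≤ 1.0541065 :=
    sqrt_le_of_sq_le (by norm_num) (by norm_num)
  have c2 : Real.sqrt (Real.sqrt 1.1111404) ≤ 1.0266969 :=
    (Real.sqrt_le_sqrt c1).trans (sqrt_le_of_sq_le (by norm_num) (by norm_num))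
  have c3 : Real.sqrt (Real.sqrt (Real.sqrt 1.1111404)) ≤ 1.0132606 :=
    (Real.sqrt_le_sqrt c2).trans (sqrt_le_of_sq_le (by norm_num) (by norm_num))
  have c4 : Real.sqrt (Real.sqrt (Real.sqrt (Real.sqrt 1.1111404))) ≤ 1.0066085 :=
    (Real.sqrt_le_sqrt c3).trans (sqrt_le_of_sq_le (by norm_num) (by norm_num))
  have := log_le_sixteen (by norm_num : (0:ℝ) < 1.1111404) c4
  linarith

/-- lower bound for `log 1.7320508` -/
lemma log_s3_lb : (0.5399 : ℝ) ≤ Real.log 1.7320508 := by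
  have c1 : (1.316074 : ℝ) ≤ Real.sqrt 1.7320508 :=
    le_sqrt_of_sq_le (by norm_num) (by norm_num)
  have c2 : (1.1472026 : ℝ) ≤ Real.sqrt (Real.sqrt 1.7320508) :=
    (le_sqrt_of_sq_le (by norm_num) (by norm_num)).trans (Real.sqrt_le_sqrt c1)
  have c3 : (1.0710754 : ℝ) ≤ Real.sqrt (Real.sqrt (Real.sqrt 1.7320508)) :=
    (le_sqrt_of_sq_le (by norm_num) (by norm_num)).trans (Real.sqrt_le_sqrt c2)
  have c4 : (1.0349277 : ℝ) ≤ Real.sqrt (Real.sqrt (Real.sqrt (Real.sqrt 1.7320508))) :=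
    (le_sqrt_of_sq_le (by norm_num) (by norm_num)).trans (Real.sqrt_le_sqrt c3)
  have := sixteen_le_log (by norm_num : (0:ℝ) < 1.0349277) c4
  nlinarith

lemma cos_pi8_ub : Real.cos (π / 8) ≤ 0.9238796 := by
  have h1 : Real.cos (π / 8) ^ 2 = 1 / 2 + Real.sqrt 2 / 4 := by
    have h := Real.cos_sq (π / 8)
    rw [show 2 * (π / 8) = π / 4 by ring, Real.cos_pi_div_four] at h
    linarith
  have hnn : 0 ≤ Real.cos (π / 8) := by
    apply Real.cos_nonneg_of_mem_Icc
    constructor <;> nlinarith [pi_pos]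
  have h2 : Real.cos (π / 8) = Real.sqrt (1 / 2 + Real.sqrt 2 / 4) := by
    rw [← h1, Real.sqrt_sq hnn]
  rw [h2]
  exact sqrt_le_of_sq_le (by norm_num) (by nlinarith [sqrt2_ub])

/-! ### Integrability -/

lemma f_measurable : Measurable f :=
  Real.measurable_log.comp (continuous_abs.comp (continuous_const.mul Real.continuous_sin)).measurable

lemma log_integrableOn : IntegrableOn Real.log (Ioc (0:ℝ) 1.2) volume := by
  have hrpow : IntervalIntegrable (fun t : ℝ => t ^ (-(1/2) : ℝ)) volume 0 1.2 :=
    intervalIntegral.intervalIntegrable_rpow' (by norm_num)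
  have hIoc : IntegrableOn (fun t : ℝ => t ^ (-(1/2) : ℝ)) (Ioc (0:ℝ) 1.2) volume :=
    (intervalIntegrable_iff_integrableOn_Ioc_of_le (by norm_num)).mp hrpow
  have hg : IntegrableOn (fun t : ℝ => 2 * t ^ (-(1/2) : ℝ)) (Ioc (0:ℝ) 1.2) volume :=
    hIoc.const_mul 2
  refine hg.mono' (Real.measurable_log.aestronglyMeasurable) ?_
  filter_upwards [ae_restrict_mem measurableSet_Ioc] with t ht
  obtain ⟨ht0, ht2⟩ := ht
  have hs : 0 < Real.sqrt t := Real.sqrt_pos.mpr ht0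
  have hrw : t ^ (-(1/2) : ℝ) = (Real.sqrt t)⁻¹ := by
    rw [Real.rpow_neg ht0.le, Real.sqrt_eq_rpow]
  rw [Real.norm_eq_abs, hrw]
  have hinv : Real.log (Real.sqrt t)⁻¹ ≤ (Real.sqrt t)⁻¹ - 1 :=
    Real.log_le_sub_one_of_pos (inv_pos.mpr hs)
  rw [Real.log_inv, Real.log_sqrt ht0.le] at hinv
  rw [abs_le]
  have hpos0 : (0:ℝ) ≤ 2 * (Real.sqrt t)⁻¹ := by positivity
  constructor
  · -- -(2 * (√t)⁻¹) ≤ log t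
    nlinarith [inv_pos.mpr hs]
  · -- log t ≤ 2 * (√t)⁻¹
    rcases le_or_gt t 1 with h1 | h1
    · have hle : Real.log t ≤ 0 := Real.log_nonpos ht0.le h1
      linarith
    · have hlt : Real.log t ≤ t - 1 := Real.log_le_sub_one_of_pos ht0
      have hst : Real.sqrt t ≤ 1.1 := sqrt_le_of_sq_le (by norm_num) (by nlinarith)
      have hinv2 : (1.1 : ℝ)⁻¹ ≤ (Real.sqrt t)⁻¹ := inv_anti₀ hs hst
      nlinarith

lemma f_integrableOn : IntegrableOn f (Ioc (0:ℝ) 1.2) volume := by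
  have hg : IntegrableOn (fun t : ℝ => |Real.log t| + 2) (Ioc (0:ℝ) 1.2) volume := by
    apply Integrable.add
    · exact log_integrableOn.abs
    · exact integrableOn_const (by rw [Real.volume_Ioc]; exact ENNReal.ofReal_ne_top)
  refine hg.mono' (f_measurable.aestronglyMeasurable) ?_
  filter_upwards [ae_restrict_mem measurableSet_Ioc] with t ht
  obtain ⟨ht0, ht2⟩ := ht
  have htpi : t < π := lt_of_le_of_lt ht2 (by linarith [Real.pi_gt_d6])
  have hsinpos : 0 < Real.sin t := Real.sin_pos_of_pos_of_lt_pi ht0 htpi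
  have habs : |2 * Real.sin t| = 2 * Real.sin t := abs_of_pos (by linarith)
  have hub : Real.log (2 * Real.sin t) ≤ |Real.log t| + 2 := by
    have h1 : Real.log (2 * Real.sin t) ≤ Real.log (2 * t) := by
      apply Real.log_le_log (by linarith)
      nlinarith [Real.sin_lt ht0]
    rw [Real.log_mul two_ne_zero ht0.ne'] at h1
    have h2 : Real.log 2 < 0.6931471808 := Real.log_two_lt_d9
    have h3 : Real.log t ≤ |Real.log t| := le_abs_self _
    linarith
  have hlb : -(|Real.log t| + 2) ≤ Real.log (2 * Real.sin t) := by
    rcases le_or_gt t 1 with h1 | h1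
    · have hcube : t - t ^ 3 / 4 < Real.sin t := by nlinarith [Real.sin_gt_sub_cube ht0, pow_pos ht0 3]
      have ht3 : t ^ 3 ≤ t := by nlinarith [mul_nonneg (mul_nonneg ht0.le (sub_nonneg.mpr h1)) (by linarith : (0:ℝ) ≤ 1 + t)]
      have h4 : t ≤ 2 * Real.sin t := by nlinarith
      have h5 : Real.log t ≤ Real.log (2 * Real.sin t) := Real.log_le_log ht0 h4
      have h6 : -|Real.log t| ≤ Real.log t := neg_abs_le _
      linarith
    · have hmono : Real.sin 1 ≤ Real.sin t := by
        apply Real.strictMonoOn_sin.monotoneOn ?_ ?_ h1.le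
        · constructor <;> nlinarith [pi_gt_d6]
        · constructor <;> nlinarith [pi_gt_d6]
      have hs1 : (3/4 : ℝ) < Real.sin 1 := by
        nlinarith [Real.sin_gt_sub_cube one_pos]
      have h7 : (0:ℝ) ≤ Real.log (2 * Real.sin t) := by
        apply Real.log_nonneg
        linarith
      have h8 : (0:ℝ) ≤ |Real.log t| := abs_nonneg _
      linarith
  rw [Real.norm_eq_abs]
  show |f t| ≤ |Real.log t| + 2
  unfold f
  rw [habs, abs_le]
  exact ⟨hlb, hub⟩

lemma f_intervalIntegrable {a b : ℝ} (ha : 0 ≤ a) (hab : a ≤ b) (hb : b ≤ 1.2) :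
    IntervalIntegrable f volume a b :=
  (intervalIntegrable_iff_integrableOn_Ioc_of_le hab).mpr
    (f_integrableOn.mono_set (Ioc_subset_Ioc ha hb))

lemma log_intervalIntegrable : IntervalIntegrable Real.log volume 0 (π/8) := by
  have hb : π / 8 ≤ 1.2 := by linarith [Real.pi_lt_d6]
  exact (intervalIntegrable_iff_integrableOn_Ioc_of_le (by positivity)).mpr
    (log_integrableOn.mono_set (Ioc_subset_Ioc le_rfl hb))

/-! ### The integral of `log` over `[0, π/8]` -/

lemma integral_log_pi8 : ∫ t in (0:ℝ)..(π/8), Real.log t = (π/8) * Real.log (π/8) - π/8 := by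
  have h := intervalIntegral.integral_eq_sub_of_hasDerivAt_of_le
    (f := fun t : ℝ => t * Real.log t - t) (f' := Real.log) (a := 0) (b := π/8)
    (by positivity)
    ((Real.continuous_mul_log.sub continuous_id).continuousOn)
    (fun t ht => by
      have h1 : HasDerivAt (fun t : ℝ => t * Real.log t) (1 * Real.log t + t * t⁻¹) t :=
        (hasDerivAt_id t).mul (Real.hasDerivAt_log (ne_of_gt ht.1))
      have h2 := h1.sub (hasDerivAt_id t)
      convert h2 using 1
      · rfl
      rw [mul_inv_cancel₀ (ne_of_gt ht.1)]
      ring)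
    log_intervalIntegrable
  rw [h]
  simp [Real.log_zero]

/-! ### Lower bound for `∫₀^{π/8} f` -/

lemma bound_I1 :
    (π/8) * (Real.log 2 - 0.0402) + ((π/8) * Real.log (π/8) - π/8)
      ≤ ∫ t in (0:ℝ)..(π/8), f t := by
  have hab : (0:ℝ) ≤ π/8 := by positivity
  have hb12 : π/8 ≤ 1.2 := by linarith [Real.pi_lt_d6]
  have hgi : IntervalIntegrable (fun t : ℝ => Real.log 2 - 0.0402 + Real.log t) volume 0 (π/8) :=
    intervalIntegrable_const.add log_intervalIntegrable
  have hmono : (∫ t in (0:ℝ)..(π/8), (Real.log 2 - 0.0402 + Real.log t))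
      ≤ ∫ t in (0:ℝ)..(π/8), f t := by
    apply intervalIntegral.integral_mono_ae_restrict hab hgi
      (f_intervalIntegrable le_rfl hab hb12)
    have hne : ∀ᵐ t ∂(volume.restrict (Icc (0:ℝ) (π/8))), t ≠ (0:ℝ) := by
      apply ae_restrict_of_ae
      rw [MeasureTheory.ae_iff]
      have : {a : ℝ | ¬ a ≠ 0} = {0} := by ext a; simp
      rw [this]
      exact measure_singleton 0
    filter_upwards [hne, ae_restrict_mem measurableSet_Icc] with t ht0 htmem
    obtain ⟨h0, h8⟩ := htmem
    have htp : 0 < t := lt_of_le_of_ne h0 (Ne.symm ht0)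
    have ht1 : t ≤ 0.3926992 := by
      have := Real.pi_lt_d6
      linarith
    have hcube : t - t ^ 3 / 4 < Real.sin t := by nlinarith [Real.sin_gt_sub_cube htp, pow_pos htp 3]
    have hppos : 0 < 2 * t * (1 - t ^ 2 / 4) := by nlinarith
    have hsinpos : 0 < Real.sin t := by nlinarith
    have habs : |2 * Real.sin t| = 2 * Real.sin t := abs_of_pos (by linarith)
    have h2 : Real.log (2 * t * (1 - t ^ 2 / 4)) ≤ Real.log (2 * Real.sin t) := by
      apply Real.log_le_log hppos
      nlinarith
    have h3 : Real.log (2 * t * (1 - t ^ 2 / 4))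
        = Real.log 2 + Real.log t + Real.log (1 - t ^ 2 / 4) := by
      rw [Real.log_mul (by positivity) (by nlinarith), Real.log_mul two_ne_zero htp.ne']
    have h4 : 1 - 1 / (1 - t ^ 2 / 4) ≤ Real.log (1 - t ^ 2 / 4) :=
      one_sub_inv_le_log (by nlinarith)
    have h5 : 1 / (1 - t ^ 2 / 4) ≤ 1.0402 := by
      rw [div_le_iff₀ (by nlinarith)]
      nlinarith
    show Real.log 2 - 0.0402 + Real.log t ≤ f t
    unfold f
    rw [habs]
    linarith
  calc (π/8) * (Real.log 2 - 0.0402) + ((π/8) * Real.log (π/8) - π/8)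
      = ∫ t in (0:ℝ)..(π/8), (Real.log 2 - 0.0402 + Real.log t) := by
        rw [intervalIntegral.integral_add intervalIntegrable_const log_intervalIntegrable,
          intervalIntegral.integral_const, integral_log_pi8, smul_eq_mul]
        ring
    _ ≤ _ := hmono

/-! ### Upper bound for `∫_{π/8}^{π/4} f` -/

lemma bound_I2 :
    (∫ t in (π/8:ℝ)..(π/4), f t)
      ≤ (π/8) * (0.105736 - 1) + (Real.cos (π/8) - Real.cos (π/4)) * (1/0.5555702) := by
  have hpi := Real.pi_gt_d6
  have hpi' := Real.pi_lt_d6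
  have hab : π/8 ≤ π/4 := by linarith
  have hgi : IntervalIntegrable
      (fun t : ℝ => (0.105736 - 1) + Real.sin t * (1/0.5555702)) volume (π/8) (π/4) :=
    (continuous_const.add (Real.continuous_sin.mul continuous_const)).intervalIntegrable _ _
  have hpt : ∀ t ∈ Icc (π/8) (π/4), f t ≤ (0.105736 - 1) + Real.sin t * (1/0.5555702) := by
    intro t ht
    obtain ⟨h1, h2⟩ := ht
    have htp : 0 < t := by linarith
    have hsinpos : 0 < Real.sin t := Real.sin_pos_of_pos_of_lt_pi htp (by linarith)
    have habs : |2 * Real.sin t| = 2 * Real.sin t := abs_of_pos (by linarith)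
    have hw : 0 < 2 * Real.sin t := by linarith
    have key : Real.log (2 * Real.sin t)
        ≤ Real.log 1.1111404 + (2 * Real.sin t) / 1.1111404 - 1 := by
      have hd : Real.log ((2 * Real.sin t) / 1.1111404)
          ≤ (2 * Real.sin t) / 1.1111404 - 1 :=
        Real.log_le_sub_one_of_pos (by positivity)
      rw [Real.log_div hw.ne' (by norm_num)] at hd
      linarith
    have hrw : (2 * Real.sin t) / 1.1111404 = Real.sin t * (1/0.5555702) := by
      rw [div_eq_mul_inv, one_div, show ((1.1111404:ℝ))⁻¹ = (0.5555702:ℝ)⁻¹ / 2 by norm_num]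
      ring
    show f t ≤ (0.105736 - 1) + Real.sin t * (1/0.5555702)
    unfold f
    rw [habs]
    rw [hrw] at key
    linarith [log_z_ub]
  have hmono := intervalIntegral.integral_mono_on hab
    (f_intervalIntegrable (by positivity) hab (by linarith)) hgi hpt
  have hcomp : (∫ t in (π/8:ℝ)..(π/4), ((0.105736 - 1) + Real.sin t * (1/0.5555702)))
      = (π/8) * (0.105736 - 1) + (Real.cos (π/8) - Real.cos (π/4)) * (1/0.5555702) := by
    rw [intervalIntegral.integral_add intervalIntegrable_const
      (show IntervalIntegrable (fun t : ℝ => Real.sin t * (1/0.5555702)) volume (π/8) (π/4) from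
        (Real.continuous_sin.mul continuous_const).intervalIntegrable _ _),
      intervalIntegral.integral_const,
      intervalIntegral.integral_mul_const, integral_sin, smul_eq_mul]
    ring
  rw [hcomp] at hmono
  exact hmono

/-! ### Lower bounds for the last two pieces -/

lemma bound_I3 :
    (π/3 - π/4) * (Real.log 2 / 2) ≤ ∫ t in (π/4:ℝ)..(π/3), f t := by
  have hpi := Real.pi_gt_d6
  have hpi' := Real.pi_lt_d6
  have hab : π/4 ≤ π/3 := by linarith
  have hpt : ∀ t ∈ Icc (π/4) (π/3), Real.log 2 / 2 ≤ f t := by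
    intro t ht
    obtain ⟨h1, h2⟩ := ht
    have htp : 0 < t := by linarith
    have hsinmono : Real.sin (π/4) ≤ Real.sin t := by
      apply Real.strictMonoOn_sin.monotoneOn ?_ ?_ h1
      · constructor <;> linarith
      · constructor <;> linarith
    rw [Real.sin_pi_div_four] at hsinmono
    have hsq2 : (0:ℝ) < Real.sqrt 2 / 2 := by positivity
    have hsinpos : 0 < Real.sin t := by linarith
    have habs : |2 * Real.sin t| = 2 * Real.sin t := abs_of_pos (by linarith)
    show Real.log 2 / 2 ≤ f t
    unfold f
    rw [habs]
    have h3 : Real.log (Real.sqrt 2) ≤ Real.log (2 * Real.sin t) := by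
      apply Real.log_le_log (Real.sqrt_pos.mpr (by norm_num))
      linarith
    rw [Real.log_sqrt (by norm_num)] at h3
    linarith
  have h := intervalIntegral.integral_mono_on hab
    (intervalIntegrable_const (c := Real.log 2 / 2))
    (f_intervalIntegrable (by positivity) hab (by linarith)) hpt
  have hcomp : (∫ _t in (π/4:ℝ)..(π/3), (Real.log 2 / 2))
      = (π/3 - π/4) * (Real.log 2 / 2) := by
    rw [intervalIntegral.integral_const, smul_eq_mul]
  rw [hcomp] at h
  exact h

lemma bound_I4 :
    (3*π/8 - π/3) * 0.5399 ≤ ∫ t in (π/3:ℝ)..(3*π/8), f t := by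
  have hpi := Real.pi_gt_d6
  have hpi' := Real.pi_lt_d6
  have hab : π/3 ≤ 3*π/8 := by linarith
  have hpt : ∀ t ∈ Icc (π/3) (3*π/8), (0.5399:ℝ) ≤ f t := by
    intro t ht
    obtain ⟨h1, h2⟩ := ht
    have htp : 0 < t := by linarith
    have hsinmono : Real.sin (π/3) ≤ Real.sin t := by
      apply Real.strictMonoOn_sin.monotoneOn ?_ ?_ h1
      · constructor <;> linarith
      · constructor <;> linarith
    rw [Real.sin_pi_div_three] at hsinmono
    have hs3 : (1.7320508:ℝ) ≤ Real.sqrt 3 := sqrt3_lb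
    have hsinpos : 0 < Real.sin t := by nlinarith
    have habs : |2 * Real.sin t| = 2 * Real.sin t := abs_of_pos (by linarith)
    show (0.5399:ℝ) ≤ f t
    unfold f
    rw [habs]
    have h3 : Real.log 1.7320508 ≤ Real.log (2 * Real.sin t) := by
      apply Real.log_le_log (by norm_num)
      nlinarith
    linarith [log_s3_lb]
  have h := intervalIntegral.integral_mono_on hab
    (intervalIntegrable_const (c := (0.5399:ℝ)))
    (f_intervalIntegrable (by positivity) hab (by linarith)) hpt
  have hcomp : (∫ _t in (π/3:ℝ)..(3*π/8), (0.5399:ℝ))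
      = (3*π/8 - π/3) * 0.5399 := by
    rw [intervalIntegral.integral_const, smul_eq_mul]
  rw [hcomp] at h
  exact h

end EdgeTwistAux

set_option maxHeartbeats 1000000 in
/-- Remark 2.1: `ω(A(4)*) > ω(A(4))`, i.e.
`(16/9)Λ(π/4) > Λ(3π/8) + Λ(π/8)`. -/
theorem edge_twist_increases_normalized_volume :
    (16 / 9 : ℝ) * lobachevsky (π / 4)
      > lobachevsky (3 * π / 8) + lobachevsky (π / 8) := by
  have hpi := Real.pi_gt_d6
  have hpi' := Real.pi_lt_d6
  -- split the integrals
  have h1 : IntervalIntegrable EdgeTwistAux.f MeasureTheory.volume 0 (π/8) :=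
    EdgeTwistAux.f_intervalIntegrable le_rfl (by positivity) (by linarith)
  have h2 : IntervalIntegrable EdgeTwistAux.f MeasureTheory.volume (π/8) (π/4) :=
    EdgeTwistAux.f_intervalIntegrable (by positivity) (by linarith) (by linarith)
  have h3 : IntervalIntegrable EdgeTwistAux.f MeasureTheory.volume (π/4) (π/3) :=
    EdgeTwistAux.f_intervalIntegrable (by positivity) (by linarith) (by linarith)
  have h4 : IntervalIntegrable EdgeTwistAux.f MeasureTheory.volume (π/3) (3*π/8) :=
    EdgeTwistAux.f_intervalIntegrable (by positivity) (by linarith) (by linarith)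
  have s1 : (∫ t in (0:ℝ)..(π/8), EdgeTwistAux.f t) + ∫ t in (π/8:ℝ)..(π/4), EdgeTwistAux.f t
      = ∫ t in (0:ℝ)..(π/4), EdgeTwistAux.f t :=
    intervalIntegral.integral_add_adjacent_intervals h1 h2
  have s2 : (∫ t in (0:ℝ)..(π/4), EdgeTwistAux.f t) + ∫ t in (π/4:ℝ)..(π/3), EdgeTwistAux.f t
      = ∫ t in (0:ℝ)..(π/3), EdgeTwistAux.f t :=
    intervalIntegral.integral_add_adjacent_intervals (h1.trans h2) h3
  have s3 : (∫ t in (0:ℝ)..(π/3), EdgeTwistAux.f t) + ∫ t in (π/3:ℝ)..(3*π/8), EdgeTwistAux.f t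
      = ∫ t in (0:ℝ)..(3*π/8), EdgeTwistAux.f t :=
    intervalIntegral.integral_add_adjacent_intervals ((h1.trans h2).trans h3) h4
  -- numeric bounds
  set I1 := ∫ t in (0:ℝ)..(π/8), EdgeTwistAux.f t with hI1
  set I2 := ∫ t in (π/8:ℝ)..(π/4), EdgeTwistAux.f t with hI2
  set I3 := ∫ t in (π/4:ℝ)..(π/3), EdgeTwistAux.f t with hI3
  set I4 := ∫ t in (π/3:ℝ)..(3*π/8), EdgeTwistAux.f t with hI4
  -- Bound for I1
  have hlog4 : Real.log 2 + Real.log (π/8) = Real.log (π/4) := by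
    rw [← Real.log_mul two_ne_zero (by positivity)]
    congr 1
    ring
  have hlogpi4_lb : (-0.27324 : ℝ) ≤ Real.log (π/4) := by
    have h := EdgeTwistAux.one_sub_inv_le_log (x := π/4) (by positivity)
    have h4pi : 1 / (π/4) ≤ 1.27324 := by
      rw [div_le_iff₀ (by positivity)]
      nlinarith
    linarith
  have hlogpi4_ub : Real.log (π/4) ≤ 0 := Real.log_nonpos (by positivity) (by linarith)
  have hbI1 : (-0.5158395 : ℝ) ≤ I1 := by
    have hb := EdgeTwistAux.bound_I1
    have heq : (π/8) * (Real.log 2 - 0.0402) + ((π/8) * Real.log (π/8) - π/8)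
        = (π/8) * (Real.log (π/4) - 1.0402) := by
      rw [← hlog4]; ring
    rw [heq] at hb
    have hp8 : π/8 ≤ 0.3926992 := by linarith
    have hq : Real.log (π/4) - 1.0402 ≥ -1.31344 := by linarith
    have hqneg : Real.log (π/4) - 1.0402 ≤ 0 := by linarith
    have hp8lo : (0:ℝ) ≤ π/8 := by positivity
    nlinarith [mul_nonneg (by linarith : (0:ℝ) ≤ 0.3926992 - π/8)
      (by linarith : (0:ℝ) ≤ -(Real.log (π/4) - 1.0402))]
  -- Bound for I2
  have hbI2 : I2 ≤ (0.0390043 : ℝ) := by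
    have hb := EdgeTwistAux.bound_I2
    have hcos4 : (0.70710678 : ℝ) ≤ Real.cos (π/4) := by
      rw [Real.cos_pi_div_four]
      linarith [EdgeTwistAux.sqrt2_lb]
    have hcos8 := EdgeTwistAux.cos_pi8_ub
    have hnum : Real.cos (π/8) - Real.cos (π/4) ≤ 0.21677282 := by linarith
    have hnum0 : (0:ℝ) ≤ 1/0.5555702 := by norm_num
    have hterm : (Real.cos (π/8) - Real.cos (π/4)) * (1/0.5555702)
        ≤ 0.21677282 * (1/0.5555702) := by
      apply mul_le_mul_of_nonneg_right hnum hnum0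
    have hp8 : (0.3926990 : ℝ) ≤ π/8 := by linarith
    have hfirst : (π/8) * (0.105736 - 1) ≤ 0.3926990 * (0.105736 - 1) := by nlinarith
    have : (0.3926990 : ℝ) * (0.105736 - 1) + 0.21677282 * (1/0.5555702) ≤ 0.0390043 := by
      norm_num
    linarith
  -- Bounds for I3, I4
  have hbI3 : (0.0907290 : ℝ) ≤ I3 := by
    have hb := EdgeTwistAux.bound_I3
    have hlog2 := Real.log_two_gt_d9
    have hlen : (0.2617993 : ℝ) ≤ π/3 - π/4 := by linarith
    have hc : (0.34657359 : ℝ) ≤ Real.log 2 / 2 := by linarith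
    nlinarith [mul_le_mul_of_nonneg_left hc (by positivity : (0:ℝ) ≤ π/3 - π/4)]
  have hbI4 : (0.0706726 : ℝ) ≤ I4 := by
    have hb := EdgeTwistAux.bound_I4
    have hlen : (0.1308996 : ℝ) ≤ 3*π/8 - π/3 := by linarith
    nlinarith
  -- assemble
  have hgoal : (16/9 : ℝ) * (-(I1 + I2)) > (-(I1 + I2 + I3 + I4)) + (-I1) := by
    linarith
  unfold lobachevsky
  show (16/9 : ℝ) * (-(∫ t in (0:ℝ)..(π/4), Real.log |2 * Real.sin t|))
      > (-(∫ t in (0:ℝ)..(3*π/8), Real.log |2 * Real.sin t|))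
        + (-(∫ t in (0:ℝ)..(π/8), Real.log |2 * Real.sin t|))
  have e1 : (∫ t in (0:ℝ)..(π/4), Real.log |2 * Real.sin t|) = I1 + I2 := by
    rw [hI1, hI2]
    exact s1.symm
  have e2 : (∫ t in (0:ℝ)..(3*π/8), Real.log |2 * Real.sin t|) = I1 + I2 + I3 + I4 := by
    have h := s3
    rw [← s2, ← s1] at h
    exact h.symm
  have e3 : (∫ t in (0:ℝ)..(π/8), Real.log |2 * Real.sin t|) = I1 := hI1
  rw [e1, e2, e3]
  exact hgoal
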